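/- The InfoNCE-style bound with N samples cannot exceed log N plus the Donsker–Varadhan gap; specifically, for any g > 0, E_{p(ω,y)}[log( g(ω,y) / ((1/N)Σ_{j=1}^N g(ω,j)) )] ≤ I(y;ω) + log N − log N = I(y;ω). -/

import Mathlib

open Finset

/-- Mutual information of a joint pmf on a product of finite sets (natural log). -/
noncomputable def mutualInfo {A B : Type*} [Fintype A] [Fintype B] (p : A → B → ℝ) : ℝ :=
  ∑ a, ∑ b, p a b * Real.log (p a b / ((∑ b', p a b') * (∑ a', p a' b)))

/-- InfoNCE-style bound with explicit `1/N` normalization: the `log N` terms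
cancel and the bound is the mutual information itself. -/
theorem infoNCE_le_mutualInfo {Ω : Type*} [Fintype Ω] {N : ℕ} (hN : 0 < N)
    (p : Ω → Fin N → ℝ) (hp : ∀ ω y, 0 ≤ p ω y) (hsum : ∑ ω, ∑ y, p ω y = 1)
    (hmargΩ : ∀ ω, 0 < ∑ y, p ω y)
    (huniform : ∀ y, ∑ ω, p ω y = 1 / N)
    (g : Ω → Fin N → ℝ) (hg : ∀ ω y, 0 < g ω y) :
    ∑ ω, ∑ y, p ω y * Real.log (g ω y / ((1 / N : ℝ) * ∑ j, g ω j))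
      ≤ mutualInfo p + Real.log N - Real.log N := by
  have hN' : (0:ℝ) < N := by exact_mod_cast hN
  haveI : Nonempty (Fin N) := Fin.pos_iff_nonempty.mp hN
  have hgsum : ∀ ω, 0 < ∑ j, g ω j := fun ω =>
    Finset.sum_pos (fun j _ => hg ω j) Finset.univ_nonempty
  set q : Ω → Fin N → ℝ := fun ω y => (∑ y', p ω y') * g ω y / ∑ j, g ω j with hqdef
  have hq0 : ∀ ω y, 0 < q ω y := fun ω y =>
    div_pos (mul_pos (hmargΩ ω) (hg ω y)) (hgsum ω)
  have hqsum : ∑ ω, ∑ y, q ω y = 1 := by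
    have : ∀ ω, ∑ y, q ω y = ∑ y', p ω y' := by
      intro ω
      show ∑ y, (∑ y', p ω y') * g ω y / ∑ j, g ω j = _
      rw [← Finset.sum_div, ← Finset.mul_sum, mul_div_assoc,
        div_self (hgsum ω).ne', mul_one]
    simp only [this]
    exact hsum
  have term : ∀ ω y, p ω y * Real.log (g ω y / ((1 / N : ℝ) * ∑ j, g ω j))
      ≤ p ω y * Real.log (p ω y / ((∑ y', p ω y') * (∑ ω', p ω' y))) + (q ω y - p ω y) := by
    intro ω y
    rcases eq_or_lt_of_le (hp ω y) with h0 | hpos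
    · rw [← h0]
      simpa using (hq0 ω y).le
    · have hA : (0:ℝ) < g ω y / ((1 / N : ℝ) * ∑ j, g ω j) :=
        div_pos (hg ω y) (mul_pos (by positivity) (hgsum ω))
      have hB : (0:ℝ) < p ω y / ((∑ y', p ω y') * (∑ ω', p ω' y)) := by
        apply div_pos hpos
        exact mul_pos (hmargΩ ω) (by rw [huniform y]; positivity)
      have key : Real.log (g ω y / ((1 / N : ℝ) * ∑ j, g ω j))
          - Real.log (p ω y / ((∑ y', p ω y') * (∑ ω', p ω' y)))
          = Real.log (q ω y / p ω y) := by
        rw [← Real.log_div hA.ne' hB.ne']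
        congr 1
        rw [huniform y]
        simp only [hqdef]
        have hNne : (N:ℝ) ≠ 0 := hN'.ne'
        field_simp
      have hlog : Real.log (q ω y / p ω y) ≤ q ω y / p ω y - 1 :=
        Real.log_le_sub_one_of_pos (div_pos (hq0 ω y) hpos)
      have : p ω y * Real.log (q ω y / p ω y) ≤ q ω y - p ω y := by
        calc p ω y * Real.log (q ω y / p ω y) ≤ p ω y * (q ω y / p ω y - 1) :=
              mul_le_mul_of_nonneg_left hlog hpos.le
          _ = q ω y - p ω y := by field_simp
      nlinarith [this, key, mul_pos hpos hA, mul_pos hpos hB]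
  calc ∑ ω, ∑ y, p ω y * Real.log (g ω y / ((1 / N : ℝ) * ∑ j, g ω j))
      ≤ ∑ ω, ∑ y, (p ω y * Real.log (p ω y / ((∑ y', p ω y') * (∑ ω', p ω' y)))
          + (q ω y - p ω y)) := by
        apply Finset.sum_le_sum; intro ω _
        apply Finset.sum_le_sum; intro y _
        exact term ω y
    _ = mutualInfo p + (∑ ω, ∑ y, q ω y) - (∑ ω, ∑ y, p ω y) := by
        simp only [Finset.sum_add_distrib, Finset.sum_sub_distrib, mutualInfo]
        ring
    _ = mutualInfo p + Real.log N - Real.log N := by rw [hqsum, hsum]; ring
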